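/- Let λ = (λ_n)_{n≥1} be a sequence in ℂ∖{0} with sup_{n∈ℕ} |λ_n| < ∞, and let a = (a_n)_{n≥1}, b = (b_n)_{n≥1} be sequences with 1 < a_n ≤ b_n that are admissible with constant q ∈ (0,1) and satisfy liminf_{n→∞} a_n > A for a sufficiently large constant A > 1 (depending on q and sup_n |λ_n|). If sup_{n∈ℕ} (log b_n)/(log a_n) < ∞, then sup_{n∈ℕ} Δ_{n+1}/a_n < ∞. -/

import Mathlib

open Filter MeasureTheory
open scoped ENNReal

/-- Non-autonomous exponential iteration: `F lam n = E_{λ_n} ∘ ⋯ ∘ E_{λ_1}`. -/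
noncomputable def F (lam : ℕ → ℂ) : ℕ → ℂ → ℂ
  | 0, z => z
  | n + 1, z => lam (n + 1) * Complex.exp (F lam n z)

/-- The set `I_a^b(E_λ)`. -/
def Iab (lam : ℕ → ℂ) (a b : ℕ → ℝ) : Set ℂ :=
  {z : ℂ | ∀ᶠ n in atTop, a n ≤ ‖F lam n z‖ ∧ ‖F lam n z‖ ≤ b n}

/-- `Δ_n = log (b_n / a_n)`. -/
noncomputable def Del (a b : ℕ → ℝ) (n : ℕ) : ℝ := Real.log (b n / a n)

/-- Admissibility of the sequences `a`, `b` with constant `q`. -/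
def Admissible (lam : ℕ → ℂ) (a b : ℕ → ℝ) (q : ℝ) : Prop :=
  ∀ᶠ n in atTop, a (n + 1) ≤ ‖lam (n + 1)‖ * Real.exp (q * a n) ∧
    ‖lam (n + 1)‖ * Real.exp (-(q * a n)) ≤ b (n + 1)

theorem stmt6 (q : ℝ) (hq : 0 < q ∧ q < 1) (Λ : ℝ) :
    ∃ A > (1 : ℝ), ∀ (lam : ℕ → ℂ) (a b : ℕ → ℝ),
      (∀ n, 1 ≤ n → lam n ≠ 0) →
      (∀ n, ‖lam n‖ ≤ Λ) →
      (∀ n, 1 ≤ n → 1 < a n ∧ a n ≤ b n) →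
      Admissible lam a b q →
      (A : EReal) < Filter.liminf (fun n : ℕ => ((a n : ℝ) : EReal)) atTop →
      (∃ C : ℝ, ∀ n, 1 ≤ n → Real.log (b n) / Real.log (a n) ≤ C) →
      ∃ C : ℝ, ∀ n, 1 ≤ n → Del a b (n + 1) / a n ≤ C := by
  refine ⟨2, one_lt_two, ?_⟩
  intro lam a b hlam hlamΛ hab hadm _ hsup
  obtain ⟨C, hC⟩ := hsup
  obtain ⟨N, hN⟩ := eventually_atTop.mp hadm
  have hCge : 1 ≤ C := by
    have h1 := hab 1 le_rfl
    have hc1 := hC 1 le_rfl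
    have hla : 0 < Real.log (a 1) := Real.log_pos h1.1
    have hlb : Real.log (a 1) ≤ Real.log (b 1) :=
      Real.log_le_log (by linarith [h1.1]) h1.2
    have : 1 ≤ Real.log (b 1) / Real.log (a 1) := (one_le_div hla).mpr hlb
    linarith
  set C1 := (C - 1) * (|Real.log Λ| + q) with hC1def
  have hne : (Finset.range (N + 1)).Nonempty := Finset.nonempty_range_iff.mpr (Nat.succ_ne_zero N)
  refine ⟨max ((Finset.range (N + 1)).sup' hne fun n => Del a b (n + 1) / a n) C1, ?_⟩
  intro n hn
  by_cases hcase : n ≤ N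
  · exact le_max_of_le_left
      (Finset.le_sup' (fun n => Del a b (n + 1) / a n)
        (Finset.mem_range.mpr (Nat.lt_succ_of_le hcase)))
  · have hNn : N ≤ n := by omega
    obtain ⟨h1, _⟩ := hN n hNn
    have ha := hab n hn
    have hab1 := hab (n + 1) (by omega)
    have hanpos : (0 : ℝ) < a n := by linarith [ha.1]
    have han1pos : (0 : ℝ) < a (n + 1) := by linarith [hab1.1]
    have hbn1pos : (0 : ℝ) < b (n + 1) := by linarith [hab1.1, hab1.2]
    have hlampos : 0 < ‖lam (n + 1)‖ :=
      norm_pos_iff.mpr (hlam (n + 1) (by omega))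
    have hΛpos : 0 < Λ := lt_of_lt_of_le hlampos (hlamΛ (n + 1))
    have hloga1 : Real.log (a (n + 1)) ≤ Real.log Λ + q * a n := by
      have step1 : Real.log (a (n + 1)) ≤
          Real.log (‖lam (n + 1)‖ * Real.exp (q * a n)) :=
        Real.log_le_log han1pos h1
      have step2 : Real.log (‖lam (n + 1)‖ * Real.exp (q * a n)) =
          Real.log (‖lam (n + 1)‖) + q * a n := by
        rw [Real.log_mul hlampos.ne' (Real.exp_ne_zero _), Real.log_exp]
      have step3 : Real.log (‖lam (n + 1)‖) ≤ Real.log Λ :=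
        Real.log_le_log hlampos (hlamΛ _)
      linarith
    have hla1 : 0 < Real.log (a (n + 1)) := Real.log_pos hab1.1
    have hlogb : Real.log (b (n + 1)) ≤ C * Real.log (a (n + 1)) :=
      (div_le_iff₀ hla1).mp (hC (n + 1) (by omega))
    have hDel : Del a b (n + 1) ≤ (C - 1) * Real.log (a (n + 1)) := by
      unfold Del
      rw [Real.log_div hbn1pos.ne' han1pos.ne']
      linarith
    have hDel2 : Del a b (n + 1) ≤ (C - 1) * (Real.log Λ + q * a n) := by
      calc Del a b (n + 1) ≤ (C - 1) * Real.log (a (n + 1)) := hDel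
        _ ≤ (C - 1) * (Real.log Λ + q * a n) :=
            mul_le_mul_of_nonneg_left hloga1 (by linarith)
    refine le_max_of_le_right ?_
    rw [div_le_iff₀ hanpos]
    have habs1 : Real.log Λ ≤ |Real.log Λ| := le_abs_self _
    have habs0 : (0 : ℝ) ≤ |Real.log Λ| := abs_nonneg _
    have han1 : (1 : ℝ) < a n := ha.1
    have key : Real.log Λ ≤ |Real.log Λ| * a n := by nlinarith
    have key2 : (C - 1) * (Real.log Λ + q * a n) ≤ C1 * a n := by
      rw [hC1def]; nlinarith
    linarith
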